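/- Define f : ℕ → ℝ by f(0) = 3 + 6√2 + 2√6, f(1) = (21 + 14√6 + 2√30)/(4·(3/2)²), f(2) = (6√2 + 39 + 28√3 + 6√10)/(4·(5/2)²), and for n ≥ 3, f(n) = [√(n(n−1)(n−2)(n−3)) + (4n−2)√(n(n−1)) + 3(n+1)² + (4n+6)√((n+1)(n+2)) + 3n² + √((n+1)(n+2)(n+3)(n+4))] / (4(n+1/2)²). Then sup_{n ∈ ℕ} f(n) = f(0) = 3 + 6√2 + 2√6. -/
import Mathlib


open Real

/-- `f n = (n+1/2)⁻² ∑_j |⟨j| x̂⁴ |n⟩|`, the normalized row sums of absolute values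
of the matrix elements of `x̂⁴` in the Fock basis. -/
noncomputable def fockRowSum (n : ℕ) : ℝ :=
  if n = 0 then 3 + 6 * Real.sqrt 2 + 2 * Real.sqrt 6
  else if n = 1 then (21 + 14 * Real.sqrt 6 + 2 * Real.sqrt 30) / (4 * (3 / 2 : ℝ) ^ 2)
  else if n = 2 then
    (6 * Real.sqrt 2 + 39 + 28 * Real.sqrt 3 + 6 * Real.sqrt 10) / (4 * (5 / 2 : ℝ) ^ 2)
  else
    (Real.sqrt ((n : ℝ) * ((n : ℝ) - 1) * ((n : ℝ) - 2) * ((n : ℝ) - 3))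
        + (4 * (n : ℝ) - 2) * Real.sqrt ((n : ℝ) * ((n : ℝ) - 1))
        + 3 * ((n : ℝ) + 1) ^ 2
        + (4 * (n : ℝ) + 6) * Real.sqrt (((n : ℝ) + 1) * ((n : ℝ) + 2))
        + 3 * (n : ℝ) ^ 2
        + Real.sqrt (((n : ℝ) + 1) * ((n : ℝ) + 2) * ((n : ℝ) + 3) * ((n : ℝ) + 4)))
      / (4 * ((n : ℝ) + 1 / 2) ^ 2)

private lemma sqrt_le_of_sq' (a b : ℝ) (hb : 0 ≤ b) (h : a ≤ b ^ 2) : Real.sqrt a ≤ b := by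
  calc Real.sqrt a ≤ Real.sqrt (b ^ 2) := Real.sqrt_le_sqrt h
  _ = b := by rw [Real.sqrt_sq hb]

private lemma sqrt2_lb : (1.4 : ℝ) ≤ Real.sqrt 2 := by
  have h := Real.sq_sqrt (by norm_num : (2:ℝ) ≥ 0)
  nlinarith [Real.sqrt_nonneg 2]

private lemma sqrt6_lb : (2.4 : ℝ) ≤ Real.sqrt 6 := by
  have h := Real.sq_sqrt (by norm_num : (6:ℝ) ≥ 0)
  nlinarith [Real.sqrt_nonneg 6]

private lemma key (n : ℕ) : fockRowSum n ≤ 3 + 6 * Real.sqrt 2 + 2 * Real.sqrt 6 := by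
  have h2 := sqrt2_lb
  have h6 := sqrt6_lb
  match n with
  | 0 => simp [fockRowSum]
  | 1 =>
    have hb6 : Real.sqrt 6 ≤ 2.5 := sqrt_le_of_sq' 6 2.5 (by norm_num) (by norm_num)
    have hb30 : Real.sqrt 30 ≤ 5.5 := sqrt_le_of_sq' 30 5.5 (by norm_num) (by norm_num)
    simp only [fockRowSum]
    norm_num
    nlinarith
  | 2 =>
    have hb2 : Real.sqrt 2 ≤ 1.5 := sqrt_le_of_sq' 2 1.5 (by norm_num) (by norm_num)
    have hb3 : Real.sqrt 3 ≤ 1.8 := sqrt_le_of_sq' 3 1.8 (by norm_num) (by norm_num)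
    have hb10 : Real.sqrt 10 ≤ 3.2 := sqrt_le_of_sq' 10 3.2 (by norm_num) (by norm_num)
    simp only [fockRowSum]
    norm_num
    nlinarith
  | (m + 3) =>
    have hn0 : (m + 3 : ℕ) ≠ 0 := by omega
    have hn1 : (m + 3 : ℕ) ≠ 1 := by omega
    have hn2 : (m + 3 : ℕ) ≠ 2 := by omega
    simp only [fockRowSum, if_neg hn0, if_neg hn1, if_neg hn2]
    set x : ℝ := ((m + 3 : ℕ) : ℝ) with hxdef
    have hx : (3 : ℝ) ≤ x := by
      rw [hxdef]; push_cast; linarith [(Nat.cast_nonneg m : (0:ℝ) ≤ m)]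
    have hs1 : Real.sqrt (x * (x - 1) * (x - 2) * (x - 3)) ≤ x ^ 2 :=
      sqrt_le_of_sq' _ _ (by positivity) (by nlinarith)
    have hs2 : Real.sqrt (x * (x - 1)) ≤ x :=
      sqrt_le_of_sq' _ _ (by linarith) (by nlinarith)
    have hs3 : Real.sqrt ((x + 1) * (x + 2)) ≤ x + 3 / 2 :=
      sqrt_le_of_sq' _ _ (by linarith) (by nlinarith)
    have hs4 : Real.sqrt ((x + 1) * (x + 2) * (x + 3) * (x + 4)) ≤ (x + 5 / 2) ^ 2 :=
      sqrt_le_of_sq' _ _ (by positivity) (by nlinarith)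
    have hden : (0 : ℝ) < 4 * (x + 1 / 2) ^ 2 := by positivity
    rw [div_le_iff₀ hden]
    have h42 : (0 : ℝ) ≤ 4 * x - 2 := by linarith
    have h46 : (0 : ℝ) ≤ 4 * x + 6 := by linarith
    nlinarith [mul_le_mul_of_nonneg_left hs2 h42, mul_le_mul_of_nonneg_left hs3 h46,
      sq_nonneg (x - 3), sq_nonneg x]

/-- The supremum of `f` over ℕ is attained at `n = 0` and equals `3 + 6√2 + 2√6`. -/
theorem fockRowSum_iSup : (⨆ n, fockRowSum n) = 3 + 6 * Real.sqrt 2 + 2 * Real.sqrt 6 := by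
  have h0 : fockRowSum 0 = 3 + 6 * Real.sqrt 2 + 2 * Real.sqrt 6 := by simp [fockRowSum]
  refine le_antisymm (ciSup_le key) ?_
  calc (3 + 6 * Real.sqrt 2 + 2 * Real.sqrt 6 : ℝ) = fockRowSum 0 := h0.symm
  _ ≤ ⨆ n, fockRowSum n := le_ciSup ⟨_, by rintro _ ⟨n, rfl⟩; exact key n⟩ 0
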